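/- Let f = m_1 + ... + m_s be a sum of distinct squarefree monomials in Z_2[x_1,...,x_n]. Then the number of zeros of f in Z_2^n is given by 2^n + d_1 + ... + d_s, where d_i = (1/2)(-2)^i · Σ_{1 ≤ j_1 < ... < j_i ≤ s} 2^{n - deg(lcm(m_{j_1},...,m_{j_i}))}. -/

import Mathlib

open MvPolynomial Finset

lemma count_aux (n : ℕ) (S : Finset (Fin n)) :
    (Finset.univ.filter (fun p : Fin n → ZMod 2 => ∀ j ∈ S, p j = 1)).card = 2 ^ (n - S.card) := by
  classical
  have h1 : (Finset.univ.filter (fun p : Fin n → ZMod 2 => ∀ j ∈ S, p j = 1))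
      = Fintype.piFinset (fun j => if j ∈ S then ({1} : Finset (ZMod 2)) else Finset.univ) := by
    ext p
    simp only [Finset.mem_filter, Finset.mem_univ, true_and, Fintype.mem_piFinset]
    constructor
    · intro h j; by_cases hj : j ∈ S <;> simp [hj, h j]
    · intro h j hj; have := h j; simp [hj] at this; exact this
  rw [h1, Fintype.card_piFinset]
  have h2 : ∀ j : Fin n, (if j ∈ S then ({1} : Finset (ZMod 2)) else Finset.univ).card
      = if j ∈ S then 1 else 2 := by
    intro j; by_cases hj : j ∈ S <;> simp [hj]
  rw [Finset.prod_congr rfl (fun j _ => h2 j), ← Finset.prod_mul_prod_compl S]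
  rw [Finset.prod_congr rfl (fun j hj => if_pos hj),
    Finset.prod_congr rfl (fun j hj => if_neg (Finset.mem_compl.mp hj))]
  simp [Finset.card_compl]

lemma eval_aux (n : ℕ) (e : Fin n → ℕ) (hsf : ∀ i, e i ≤ 1) (p : Fin n → ZMod 2) :
    eval p (monomial (Finsupp.equivFunOnFinite.symm e) (1 : ZMod 2))
      = if ∀ j, 1 ≤ e j → p j = 1 then 1 else 0 := by
  classical
  rw [eval_monomial, one_mul]
  rw [Finsupp.prod_fintype _ _ (fun j => pow_zero (p j))]
  simp only [Finsupp.coe_equivFunOnFinite_symm]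
  by_cases h : ∀ j, 1 ≤ e j → p j = 1
  · rw [if_pos h]
    apply Finset.prod_eq_one
    intro j _
    rcases Nat.le_one_iff_eq_zero_or_eq_one.mp (hsf j) with h0 | h1
    · rw [h0, pow_zero]
    · rw [h1, pow_one]; exact h j (le_of_eq h1.symm)
  · rw [if_neg h]
    push_neg at h
    obtain ⟨j, hj1, hj2⟩ := h
    apply Finset.prod_eq_zero (Finset.mem_univ j)
    have hp0 : p j = 0 := by
      have : ∀ x : ZMod 2, x ≠ 1 → x = 0 := by decide
      exact this _ hj2
    rw [hp0, zero_pow (by omega)]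

theorem stmt_19 (n s : ℕ) (m : Fin s → (Fin n → ℕ))
    (hinj : Function.Injective m) (hsf : ∀ k i, m k i ≤ 1) :
    ((Finset.univ.filter (fun p : Fin n → ZMod 2 =>
        eval p (∑ k : Fin s, monomial (Finsupp.equivFunOnFinite.symm (m k)) (1 : ZMod 2)) = 0)).card : ℤ) =
      2 ^ n + ∑ i ∈ Finset.Icc 1 s,
        (-1) ^ i * 2 ^ (i - 1) *
          ∑ T ∈ Finset.univ.powersetCard i,
            2 ^ (n - (Finset.univ.filter (fun j : Fin n => ∃ k ∈ T, 1 ≤ m k j)).card) := by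
  classical
  set A : ℕ → ℤ := fun i => ∑ T ∈ Finset.univ.powersetCard i,
      (2:ℤ) ^ (n - (Finset.univ.filter (fun j : Fin n => ∃ k ∈ T, 1 ≤ m k j)).card) with hA
  set N : (Fin n → ZMod 2) → ℕ :=
      fun p => (Finset.univ.filter fun k : Fin s => ∀ j, 1 ≤ m k j → p j = 1).card with hN
  -- the zero set is the set where N is even
  have hcond : ∀ p : Fin n → ZMod 2,
      (eval p (∑ k : Fin s, monomial (Finsupp.equivFunOnFinite.symm (m k)) (1 : ZMod 2)) = 0)
        ↔ Even (N p) := by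
    intro p
    rw [map_sum, Finset.sum_congr rfl (fun k _ => eval_aux n (m k) (hsf k) p),
      Finset.sum_boole]
    rw [ZMod.natCast_eq_zero_iff]
    exact even_iff_two_dvd.symm
  have hfilter : (Finset.univ.filter (fun p : Fin n → ZMod 2 =>
        eval p (∑ k : Fin s, monomial (Finsupp.equivFunOnFinite.symm (m k)) (1 : ZMod 2)) = 0))
      = Finset.univ.filter (fun p => Even (N p)) :=
    Finset.filter_congr fun p _ => by rw [hcond p]
  -- (-1)^(N p) as a product
  have hprodneg : ∀ p : Fin n → ZMod 2, ((-1:ℤ))^(N p)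
      = ∏ k : Fin s, (1 - 2 * (if (∀ j, 1 ≤ m k j → p j = 1) then (1:ℤ) else 0)) := by
    intro p
    have h1 : ∀ k : Fin s, (1 - 2 * (if (∀ j, 1 ≤ m k j → p j = 1) then (1:ℤ) else 0))
        = (-1:ℤ)^(if (∀ j, 1 ≤ m k j → p j = 1) then 1 else 0 : ℕ) := by
      intro k; split <;> norm_num
    rw [Finset.prod_congr rfl fun k _ => h1 k, Finset.prod_pow_eq_pow_sum, Finset.sum_boole,
      Nat.cast_id]
  -- expansion of the product over subsets
  have hexp : ∀ p : Fin n → ZMod 2,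
      ∏ k : Fin s, (1 - 2 * (if (∀ j, 1 ≤ m k j → p j = 1) then (1:ℤ) else 0))
      = ∑ t ∈ (Finset.univ : Finset (Fin s)).powerset,
          (-2:ℤ)^t.card * (if (∀ j, (∃ k ∈ t, 1 ≤ m k j) → p j = 1) then 1 else 0) := by
    intro p
    have h2 : ∀ k : Fin s, (1 - 2 * (if (∀ j, 1 ≤ m k j → p j = 1) then (1:ℤ) else 0))
        = (-2) * (if (∀ j, 1 ≤ m k j → p j = 1) then (1:ℤ) else 0) + 1 := by
      intro k; ring
    rw [Finset.prod_congr rfl fun k _ => h2 k, Finset.prod_add]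
    refine Finset.sum_congr rfl fun t ht => ?_
    rw [Finset.prod_const_one, mul_one, Finset.prod_mul_distrib, Finset.prod_const,
      Finset.prod_boole]
    have hiff : (∀ k ∈ t, ∀ j, 1 ≤ m k j → p j = 1) ↔ (∀ j, (∃ k ∈ t, 1 ≤ m k j) → p j = 1) := by
      constructor
      · rintro h j ⟨k, hk, hk1⟩; exact h k hk j hk1
      · intro h k hk j hj; exact h j ⟨k, hk, hj⟩
    simp only [hiff]
  -- sum over p of the indicator for a subset t
  have hsump : ∀ t : Finset (Fin s),
      (∑ p : Fin n → ZMod 2, (if (∀ j, (∃ k ∈ t, 1 ≤ m k j) → p j = 1) then (1:ℤ) else 0))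
        = (2:ℤ) ^ (n - (Finset.univ.filter (fun j : Fin n => ∃ k ∈ t, 1 ≤ m k j)).card) := by
    intro t
    rw [Finset.sum_boole]
    have h3 : (Finset.univ.filter (fun p : Fin n → ZMod 2 => ∀ j, (∃ k ∈ t, 1 ≤ m k j) → p j = 1))
        = Finset.univ.filter (fun p : Fin n → ZMod 2 =>
            ∀ j ∈ Finset.univ.filter (fun j : Fin n => ∃ k ∈ t, 1 ≤ m k j), p j = 1) := by
      refine Finset.filter_congr fun p _ => ?_
      simp only [Finset.mem_filter, Finset.mem_univ, true_and]
    rw [h3, count_aux]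
    push_cast
    rfl
  -- main computation, multiplied by 2
  have key : (2:ℤ) * ((Finset.univ.filter (fun p : Fin n → ZMod 2 =>
        eval p (∑ k : Fin s, monomial (Finsupp.equivFunOnFinite.symm (m k)) (1 : ZMod 2)) = 0)).card : ℤ)
      = 2 * ((2:ℤ) ^ n + ∑ i ∈ Finset.Icc 1 s, (-1) ^ i * 2 ^ (i - 1) * A i) := by
    have lhs1 : ((Finset.univ.filter (fun p : Fin n → ZMod 2 =>
        eval p (∑ k : Fin s, monomial (Finsupp.equivFunOnFinite.symm (m k)) (1 : ZMod 2)) = 0)).card : ℤ)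
        = ∑ p : Fin n → ZMod 2, (if Even (N p) then (1:ℤ) else 0) := by
      rw [hfilter, Finset.sum_boole]
    rw [lhs1, Finset.mul_sum]
    have step1 : ∀ p : Fin n → ZMod 2,
        (2:ℤ) * (if Even (N p) then (1:ℤ) else 0) = 1 + (-1:ℤ)^(N p) := by
      intro p
      by_cases h : Even (N p)
      · rw [if_pos h, h.neg_one_pow]; ring
      · rw [if_neg h, (Nat.not_even_iff_odd.mp h).neg_one_pow]; ring
    rw [Finset.sum_congr rfl fun p _ => step1 p, Finset.sum_add_distrib]
    have hcardfun : ∑ _p : Fin n → ZMod 2, (1:ℤ) = 2 ^ n := by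
      simp [Finset.card_univ]
    rw [hcardfun]
    rw [Finset.sum_congr rfl fun p _ => hprodneg p,
      Finset.sum_congr rfl fun p _ => hexp p, Finset.sum_comm]
    have step2 : ∀ t ∈ (Finset.univ : Finset (Fin s)).powerset,
        (∑ p : Fin n → ZMod 2,
          (-2:ℤ)^t.card * (if (∀ j, (∃ k ∈ t, 1 ≤ m k j) → p j = 1) then 1 else 0))
        = (-2:ℤ)^t.card *
            (2:ℤ) ^ (n - (Finset.univ.filter (fun j : Fin n => ∃ k ∈ t, 1 ≤ m k j)).card) := by
      intro t _
      rw [← Finset.mul_sum, hsump t]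
    rw [Finset.sum_congr rfl step2]
    rw [Finset.sum_powerset]
    have step3 : ∀ i ∈ Finset.range ((Finset.univ : Finset (Fin s)).card + 1),
        (∑ t ∈ Finset.powersetCard i (Finset.univ : Finset (Fin s)),
          (-2:ℤ)^t.card *
            (2:ℤ) ^ (n - (Finset.univ.filter (fun j : Fin n => ∃ k ∈ t, 1 ≤ m k j)).card))
        = (-2:ℤ)^i * A i := by
      intro i _
      rw [hA, Finset.mul_sum]
      refine Finset.sum_congr rfl fun t ht => ?_
      rw [(Finset.mem_powersetCard.mp ht).2]
    rw [Finset.sum_congr rfl step3]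
    have hcards : (Finset.univ : Finset (Fin s)).card = s := by simp
    rw [hcards, Finset.sum_range_succ']
    have hA0 : A 0 = 2 ^ n := by
      rw [hA]; simp
    rw [hA0]
    -- now handle the RHS
    rw [mul_add, Finset.mul_sum, ← Finset.Ico_add_one_right_eq_Icc, Finset.sum_Ico_eq_sum_range,
      Nat.add_one_sub_one]
    have step4 : ∀ i ∈ Finset.range s,
        (2:ℤ) * ((-1) ^ (1 + i) * 2 ^ (1 + i - 1) * A (1 + i))
        = (-2:ℤ)^(i+1) * A (i+1) := by
      intro i _
      have h5 : 1 + i - 1 = i := by omega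
      have h6 : 1 + i = i + 1 := by omega
      rw [h5, h6, show ((-2:ℤ))^(i+1) = (-1)^(i+1) * 2^(i+1) by rw [← neg_one_mul, mul_pow]]
      ring
    rw [Finset.sum_congr rfl step4]
    ring
  exact mul_left_cancel₀ two_ne_zero key
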